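/- Let A, B be linear operators on a complex vector space V such that for every x ∈ V the vectors Ax and Bx are linearly dependent. If the rank of B is at least 2, then A = λB for some scalar λ ∈ ℂ. -/

import Mathlib

/-- if `A`, `B` are linear operators on a complex vector space such that
`Ax` and `Bx` are linearly dependent for every `x` (local linear dependence), and the
rank of `B` is at least `2`, then `A` is a scalar multiple of `B`. -/
theorem locally_linearly_dependent_of_rank_ge_two
    {V : Type} [AddCommGroup V] [Module ℂ V]
    (A B : V →ₗ[ℂ] V)
    (hdep : ∀ x : V, ¬ LinearIndependent ℂ ![A x, B x])
    (hrank : 2 ≤ Module.rank ℂ (LinearMap.range B)) :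
    ∃ lam : ℂ, A = lam • B := by
  classical
  -- Extraction: whenever `B x ≠ 0`, `A x` is a multiple of `B x`.
  have hA : ∀ x : V, B x ≠ 0 → ∃ c : ℂ, A x = c • B x := by
    intro x hx
    have h := hdep x
    rw [linearIndependent_fin2] at h
    push_neg at h
    simp only [Matrix.cons_val_one, Matrix.head_cons, Matrix.cons_val_zero] at h
    obtain ⟨a, ha⟩ := h hx
    exact ⟨a, ha.symm⟩
  -- key algebraic step
  have key : ∀ (x y : V) (cx cy cxy : ℂ), A x = cx • B x → A y = cy • B y →
      A (x + y) = cxy • B (x + y) → LinearIndependent ℂ ![B x, B y] → cx = cy := by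
    intro x y cx cy cxy h1 h2 h3 hind
    have h4 : cx • B x + cy • B y = cxy • B x + cxy • B y := by
      rw [← h1, ← h2, ← map_add, h3, map_add, smul_add]
    have h5 : (cx - cxy) • B x + (cy - cxy) • B y = 0 := by
      rw [sub_smul, sub_smul]
      rw [show cx • B x - cxy • B x + (cy • B y - cxy • B y)
          = (cx • B x + cy • B y) - (cxy • B x + cxy • B y) by abel, h4, sub_self]
    obtain ⟨e1, e2⟩ := LinearIndependent.pair_iff.mp hind _ _ h5
    have e1' : cx = cxy := sub_eq_zero.mp e1
    have e2' : cy = cxy := sub_eq_zero.mp e2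
    rw [e1', e2']
  -- from independence, scalars agree
  have step : ∀ (x y : V) (cx cy : ℂ), A x = cx • B x → A y = cy • B y →
      LinearIndependent ℂ ![B x, B y] → cx = cy := by
    intro x y cx cy h1 h2 hind
    have hBxy : B (x + y) ≠ 0 := by
      intro h0
      rw [map_add] at h0
      have := (LinearIndependent.pair_iff.mp hind 1 1 (by simpa using h0)).1
      exact one_ne_zero this
    obtain ⟨cxy, hcxy⟩ := hA (x + y) hBxy
    exact key x y cx cy cxy h1 h2 hcxy hind
  -- existence of an independent partner
  have hz : ∀ x : V, B x ≠ 0 → ∃ z : V, LinearIndependent ℂ ![B x, B z] := by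
    intro x hx
    by_contra h
    push_neg at h
    have hsub : LinearMap.range B ≤ Submodule.span ℂ {B x} := by
      rintro _ ⟨z, rfl⟩
      have hz := h z
      rw [linearIndependent_fin2] at hz
      push_neg at hz
      simp only [Matrix.cons_val_one, Matrix.head_cons, Matrix.cons_val_zero] at hz
      by_cases hz0 : B z = 0
      · rw [hz0]; exact Submodule.zero_mem _
      · obtain ⟨a, ha⟩ := hz hz0
        have ha0 : a ≠ 0 := by
          rintro rfl
          rw [zero_smul] at ha
          exact hx ha.symm
        have : B z = a⁻¹ • B x := by
          rw [← ha, smul_smul, inv_mul_cancel₀ ha0, one_smul]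
        rw [this]
        exact Submodule.smul_mem _ _ (Submodule.mem_span_singleton_self _)
    have h1 : Module.rank ℂ (LinearMap.range B) ≤ 1 := by
      refine (Submodule.rank_mono hsub).trans ?_
      simpa using rank_span_le (R := ℂ) ({B x} : Set V)
    have := hrank.trans h1
    norm_num at this
  -- scalars agree for any two points with nonzero image
  have step2 : ∀ (x y : V) (cx cy : ℂ), B x ≠ 0 → B y ≠ 0 →
      A x = cx • B x → A y = cy • B y → cx = cy := by
    intro x y cx cy hx hy h1 h2
    by_cases hind : LinearIndependent ℂ ![B x, B y]
    · exact step x y cx cy h1 h2 hind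
    · rw [linearIndependent_fin2] at hind
      push_neg at hind
      simp only [Matrix.cons_val_one, Matrix.head_cons, Matrix.cons_val_zero] at hind
      obtain ⟨a, ha⟩ := hind hy
      have ha0 : a ≠ 0 := by
        rintro rfl
        rw [zero_smul] at ha
        exact hx ha.symm
      have hBy : B y = a⁻¹ • B x := by
        rw [← ha, smul_smul, inv_mul_cancel₀ ha0, one_smul]
      obtain ⟨z, hzind⟩ := hz x hx
      have hBz : B z ≠ 0 := by
        intro h0
        have := (LinearIndependent.pair_iff.mp hzind 0 1 (by simp [h0])).2
        exact one_ne_zero this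
      obtain ⟨cz, hcz⟩ := hA z hBz
      have e1 : cx = cz := step x z cx cz h1 hcz hzind
      have hyind : LinearIndependent ℂ ![B y, B z] := by
        rw [LinearIndependent.pair_iff]
        intro s t hst
        rw [hBy, smul_smul] at hst
        obtain ⟨u1, u2⟩ := LinearIndependent.pair_iff.mp hzind _ _ hst
        refine ⟨?_, u2⟩
        have : a⁻¹ ≠ 0 := inv_ne_zero ha0
        field_simp at u1
        simpa [ha0] using u1
      have e2 : cy = cz := step y z cy cz h2 hcz hyind
      rw [e1, e2]
  -- pick a base point
  have hx0 : ∃ x0 : V, B x0 ≠ 0 := by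
    by_contra h
    push_neg at h
    have : LinearMap.range B ≤ ⊥ := by
      rintro _ ⟨z, rfl⟩
      simp [h z]
    have h1 : Module.rank ℂ (LinearMap.range B) ≤ 0 := by
      refine (Submodule.rank_mono this).trans ?_
      simp [rank_subsingleton']
    have := hrank.trans h1
    norm_num at this
  obtain ⟨x0, hxne⟩ := hx0
  obtain ⟨c0, hc0⟩ := hA x0 hxne
  refine ⟨c0, ?_⟩
  ext x
  simp only [LinearMap.smul_apply]
  by_cases hx : B x = 0
  · have hBxx0 : B (x + x0) ≠ 0 := by
      rw [map_add, hx, zero_add]; exact hxne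
    obtain ⟨c, hc⟩ := hA (x + x0) hBxx0
    have : c = c0 := step2 (x + x0) x0 c c0 hBxx0 hxne hc hc0
    rw [map_add] at hc
    rw [map_add, hx, zero_add, this] at hc
    have hAx : A x = c0 • B x0 - A x0 := by
      rw [← hc]; abel
    rw [hAx, hc0, hx, smul_zero, sub_self]
  · obtain ⟨c, hc⟩ := hA x hx
    have : c = c0 := step2 x x0 c c0 hx hxne hc hc0
    rw [hc, this]
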